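/- Let k_1,…,k_n be positive integers. Then ζ_𝒜(k_n,…,k_1) = (−1)^{k_1+⋯+k_n} · ζ_𝒜(k_1,…,k_n) in 𝒜. -/

import Mathlib

open scoped BigOperators

/-- The product of `ℤ/pℤ` over all primes `p`. -/
abbrev PreA : Type := ∀ p : Nat.Primes, ZMod p

/-- The ideal of families that vanish for all but finitely many primes. -/
def nullIdeal : Ideal PreA where
  carrier := {f | {p | f p ≠ 0}.Finite}
  zero_mem' := by simp
  add_mem' := by
    intro f g hf hg
    refine (hf.union hg).subset fun p hp => ?_
    by_contra hc
    simp only [Set.mem_union, Set.mem_setOf_eq, not_or, not_not] at hc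
    exact hp (by simp [Set.mem_setOf_eq, hc.1, hc.2])
  smul_mem' := by
    intro c f hf
    refine hf.subset fun p hp => ?_
    simp only [Set.mem_setOf_eq] at hp ⊢
    intro h0
    exact hp (by simp [h0])

/-- The ring `𝒜 = (∏_p ℤ/pℤ)/(⊕_p ℤ/pℤ)`. -/
abbrev A : Type := PreA ⧸ nullIdeal

/-- `zetaSum p ks b` is `∑_{b > m₁ > ⋯ > m_n ≥ 1} ∏ mᵢ^{-kᵢ}` in `ℤ/pℤ`. -/
def zetaSum (p : ℕ) : List ℕ → ℕ → ZMod p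
  | [], _ => 1
  | k :: ks, b => ∑ m ∈ Finset.Ico 1 b, ((m : ZMod p)⁻¹) ^ k * zetaSum p ks m

/-- `zetaStarSum p ks b` is `∑_{b > m₁ ≥ ⋯ ≥ m_n ≥ 1} ∏ mᵢ^{-kᵢ}` in `ℤ/pℤ`. -/
def zetaStarSum (p : ℕ) : List ℕ → ℕ → ZMod p
  | [], _ => 1
  | k :: ks, b => ∑ m ∈ Finset.Ico 1 b, ((m : ZMod p)⁻¹) ^ k * zetaStarSum p ks (m + 1)

/-- The finite multiple zeta value `ζ_𝒜(k₁,…,k_n)`. -/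
def zetaA (ks : List ℕ) : A :=
  Ideal.Quotient.mk nullIdeal (fun p => zetaSum p ks p)

/-- The finite multiple zeta-star value `ζ⋆_𝒜(k₁,…,k_n)`. -/
def zetaStarA (ks : List ℕ) : A :=
  Ideal.Quotient.mk nullIdeal (fun p => zetaStarSum p ks p)

/-- `ℋ¹ = ℚ⟨z₁,z₂,…⟩`, the noncommutative polynomial algebra on variables `z_k`, `k ≥ 1`. -/
abbrev H1 : Type := MonoidAlgebra ℚ (FreeMonoid ℕ+)

/-- The monomial (word) `z_{k₁} ⋯ z_{k_n}` in `ℋ¹`. -/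
noncomputable def word (w : List ℕ+) : H1 :=
  MonoidAlgebra.of ℚ (FreeMonoid ℕ+) (FreeMonoid.ofList w)

/-- Shuffle product on words (with values in `ℋ¹`). -/
noncomputable def shuffleW : List ℕ+ → List ℕ+ → H1
  | [], w => word w
  | v, [] => word v
  | k :: v, l :: w => word [k] * shuffleW v (l :: w) + word [l] * shuffleW (k :: v) w
  termination_by v w => v.length + w.length
  decreasing_by all_goals first | (simp; omega) | simp | omega

/-- The shuffle product `ш` on `ℋ¹`, as the bilinear extension of `shuffleW`. -/
noncomputable def shuffle (x y : H1) : H1 :=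
  Finsupp.sum x.coeff fun v c => Finsupp.sum y.coeff fun w c' =>
    (c * c') • shuffleW (FreeMonoid.toList v) (FreeMonoid.toList w)

/-- Harmonic product on words (with values in `ℋ¹`). -/
noncomputable def harmW : List ℕ+ → List ℕ+ → H1
  | [], w => word w
  | v, [] => word v
  | k :: v, l :: w =>
      word [k] * harmW v (l :: w) + word [l] * harmW (k :: v) w
        + word [k + l] * harmW v w
  termination_by v w => v.length + w.length
  decreasing_by all_goals first | (simp; omega) | simp | omega

/-- The harmonic product `*` on `ℋ¹`, as the bilinear extension of `harmW`. -/
noncomputable def harm (x y : H1) : H1 :=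
  Finsupp.sum x.coeff fun v c => Finsupp.sum y.coeff fun w c' =>
    (c * c') • harmW (FreeMonoid.toList v) (FreeMonoid.toList w)

/-- Star-harmonic product on words (with values in `ℋ¹`). -/
noncomputable def harmStarW : List ℕ+ → List ℕ+ → H1
  | [], w => word w
  | v, [] => word v
  | k :: v, l :: w =>
      word [k] * harmStarW v (l :: w) + word [l] * harmStarW (k :: v) w
        - word [k + l] * harmStarW v w
  termination_by v w => v.length + w.length
  decreasing_by all_goals first | (simp; omega) | simp | omega

/-- The product `∗̄` on `ℋ¹`, as the bilinear extension of `harmStarW`. -/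
noncomputable def harmStar (x y : H1) : H1 :=
  Finsupp.sum x.coeff fun v c => Finsupp.sum y.coeff fun w c' =>
    (c * c') • harmStarW (FreeMonoid.toList v) (FreeMonoid.toList w)

/-- The image of a rational number in `𝒜`. -/
def ratA (q : ℚ) : A :=
  Ideal.Quotient.mk nullIdeal (fun p => (q.num : ZMod p) * ((q.den : ZMod p))⁻¹)

/-- The `ℚ`-linear map `Z_𝒜 : ℋ¹ → 𝒜` sending `z_{k₁} ⋯ z_{k_n}` to `ζ_𝒜(k₁,…,k_n)`. -/
noncomputable def ZA (x : H1) : A :=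
  Finsupp.sum x.coeff fun w c => ratA c * zetaA ((FreeMonoid.toList w).map (fun k => (k : ℕ)))

/-- The `ℚ`-linear map `Z̄_𝒜 : ℋ¹ → 𝒜` sending `z_{k₁} ⋯ z_{k_n}` to `ζ⋆_𝒜(k₁,…,k_n)`. -/
noncomputable def ZSA (x : H1) : A :=
  Finsupp.sum x.coeff fun w c => ratA c * zetaStarA ((FreeMonoid.toList w).map (fun k => (k : ℕ)))

/-- Sum of a list of positive integers (equal to the actual sum for nonempty lists). -/
def psum : List ℕ+ → ℕ+
  | [] => 1
  | k :: t => t.foldl (· + ·) k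

/-- The map `d` on words: `d(z_{k₁}⋯z_{k_n}) = ∑_{m} ∑_{0=i₀<⋯<i_m=n}
`z_{k_{i₀+1}+⋯+k_{i₁}} ⋯ z_{k_{i_{m-1}+1}+⋯+k_{i_m}}`. -/
noncomputable def dW (w : List ℕ+) : H1 :=
  ∑ c : Composition w.length, word ((w.splitWrtComposition c).map psum)

/-- `z_a` for a tuple `a = (a₁,…,a_m; b₁,…,b_m; c₁,…,c_n) ∈ I_{m,n}`:
`∑_{σ,τ ∈ S_m} z_{a_{σ(1)}} z_{b_{τ(1)}} ⋯ z_{a_{σ(m)}} z_{b_{τ(m)}} ш z_{c₁} ш ⋯ ш z_{c_n}`. -/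
noncomputable def zTuple {m n : ℕ} (a b : Fin m → ℕ+) (c : Fin n → ℕ+) : H1 :=
  ∑ σ : Equiv.Perm (Fin m), ∑ τ : Equiv.Perm (Fin m),
    (List.ofFn c).foldl (fun w k => shuffle w (word [k]))
      (word ((List.ofFn (fun i => [a (σ i), b (τ i)])).flatten))

/-- The statement `P_{m,n}`: `Z_𝒜(z_a) = Z̄_𝒜(z_a) = 0` for all `a ∈ I_{m,n}`. -/
def Pmn (m n : ℕ) : Prop :=
  ∀ (a b : Fin m → ℕ+) (c : Fin n → ℕ+),
    (∀ i, Odd (a i : ℕ)) → (∀ i, Odd (b i : ℕ)) → (∀ j, Even (c j : ℕ)) →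
    ZA (zTuple a b c) = 0 ∧ ZSA (zTuple a b c) = 0

/-- The list `{c}^{n₀}, a, {c}^{n₁}, b, {c}^{n₂}, …, a, {c}^{n_{2m-1}}, b, {c}^{n_{2m}}`. -/
def bbList (a b c : ℕ) (m : ℕ) (f : Fin (2 * m + 1) → ℕ) : List ℕ :=
  (List.ofFn (fun j : Fin m =>
      List.replicate (f ⟨2 * j.val, by have := j.isLt; omega⟩) c ++ [a]
        ++ List.replicate (f ⟨2 * j.val + 1, by have := j.isLt; omega⟩) c ++ [b])).flatten
    ++ List.replicate (f ⟨2 * m, by omega⟩) c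

/-- two-sided sum: `∑_{b > m₁ > ⋯ > m_n ≥ a} ∏ mᵢ^{-kᵢ}`. -/
def gSum (p : ℕ) : List ℕ → ℕ → ℕ → ZMod p
  | [], _, _ => 1
  | k :: ks, a, b => ∑ m ∈ Finset.Ico a b, ((m : ZMod p)⁻¹) ^ k * gSum p ks a m

/-- like `gSum` but with `m ↦ p - m` applied inside. -/
def gSum' (p : ℕ) : List ℕ → ℕ → ℕ → ZMod p
  | [], _, _ => 1
  | k :: ks, a, b => ∑ m ∈ Finset.Ico a b, (((p - m : ℕ) : ZMod p)⁻¹) ^ k * gSum' p ks a m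

lemma zetaSum_eq_gSum (p : ℕ) (ks : List ℕ) (b : ℕ) : zetaSum p ks b = gSum p ks 1 b := by
  induction ks generalizing b with
  | nil => rfl
  | cons k t ih => simp [zetaSum, gSum, ih]

lemma gSum_append (p : ℕ) (t : List ℕ) (k : ℕ) : ∀ a b : ℕ,
    gSum p (t ++ [k]) a b = ∑ m ∈ Finset.Ico a b, ((m : ZMod p)⁻¹) ^ k * gSum p t (m + 1) b := by
  induction t with
  | nil => intro a b; simp [gSum]
  | cons l s ih =>
    intro a b
    show (∑ m1 ∈ Finset.Ico a b, ((m1 : ZMod p)⁻¹) ^ l * gSum p (s ++ [k]) a m1) = _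
    simp_rw [ih, Finset.mul_sum]
    rw [← Finset.sum_Ico_Ico_comm' a b
      (fun m m1 => ((m1 : ZMod p)⁻¹) ^ l * (((m : ZMod p)⁻¹) ^ k * gSum p s (m + 1) m1))]
    show _ = ∑ m ∈ Finset.Ico a b, ((m : ZMod p)⁻¹) ^ k *
        ∑ m1 ∈ Finset.Ico (m+1) b, ((m1 : ZMod p)⁻¹) ^ l * gSum p s (m + 1) m1
    refine Finset.sum_congr rfl fun m _ => ?_
    rw [Finset.mul_sum]
    refine Finset.sum_congr rfl fun m1 _ => ?_
    ring

lemma gSum'_eq (p : ℕ) [Fact (Nat.Prime p)] (ks : List ℕ) : ∀ a b : ℕ, b ≤ p →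
    gSum' p ks a b = (-1 : ZMod p) ^ ks.sum * gSum p ks a b := by
  induction ks with
  | nil => intro a b _; simp [gSum, gSum']
  | cons k t ih =>
    intro a b hb
    rw [gSum', gSum, Finset.mul_sum]
    refine Finset.sum_congr rfl fun m hm => ?_
    have hm' := Finset.mem_Ico.mp hm
    have hmp : m ≤ p := le_trans (le_of_lt hm'.2) hb
    have hcast : ((p - m : ℕ) : ZMod p) = -(m : ZMod p) := by
      rw [Nat.cast_sub hmp, ZMod.natCast_self, zero_sub]
    rw [hcast, ih a m (le_trans (le_of_lt hm'.2) hb), inv_neg, neg_pow, List.sum_cons, pow_add]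
    ring

lemma gSum_reverse (p : ℕ) (ks : List ℕ) : ∀ a b : ℕ, 1 ≤ a → b ≤ p →
    gSum p ks.reverse a b = gSum' p ks (p - b + 1) (p - a + 1) := by
  induction ks with
  | nil => intro a b _ _; rfl
  | cons k t ih =>
    intro a b ha hb
    rw [List.reverse_cons, gSum_append, gSum']
    refine Finset.sum_nbij' (i := fun l => p - l) (j := fun m => p - m) ?_ ?_ ?_ ?_ ?_
    · intro l hl
      have := Finset.mem_Ico.mp hl
      simp only [Finset.mem_Ico]
      omega
    · intro m hm
      have := Finset.mem_Ico.mp hm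
      simp only [Finset.mem_Ico]
      omega
    · intro l hl; have := Finset.mem_Ico.mp hl; omega
    · intro m hm; have := Finset.mem_Ico.mp hm; omega
    · intro l hl
      have h := Finset.mem_Ico.mp hl
      have h1 : p - (p - l) = l := by omega
      have h2 : p - (l + 1) + 1 = p - l := by omega
      rw [ih (l + 1) b (by omega) hb, h1, h2]

theorem zetaA_reverse' (p : ℕ) [Fact (Nat.Prime p)] (ks : List ℕ) :
    zetaSum p ks.reverse p = (-1 : ZMod p) ^ ks.sum * zetaSum p ks p := by
  have hp2 : 2 ≤ p := (Fact.out : Nat.Prime p).two_le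
  rw [zetaSum_eq_gSum, zetaSum_eq_gSum, gSum_reverse p ks 1 p le_rfl le_rfl,
    show p - p + 1 = 1 by omega, show p - 1 + 1 = p by omega, gSum'_eq p ks 1 p le_rfl]

/-- Reversal formula: `ζ_𝒜(k_n,…,k₁) = (−1)^{k₁+⋯+k_n} ζ_𝒜(k₁,…,k_n)`. -/
theorem zetaA_reverse (ks : List ℕ) (hk : ∀ k ∈ ks, 0 < k) :
    zetaA ks.reverse = (-1 : A) ^ ks.sum * zetaA ks := by
  have key : (fun p : Nat.Primes => zetaSum p ks.reverse p)
      = (-1 : PreA) ^ ks.sum * (fun p : Nat.Primes => zetaSum p ks p) := by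
    funext p
    haveI : Fact (Nat.Prime (p : ℕ)) := ⟨p.prop⟩
    simpa using zetaA_reverse' (p : ℕ) ks
  show Ideal.Quotient.mk nullIdeal (fun p : Nat.Primes => zetaSum p ks.reverse p) = _
  rw [key, map_mul, map_pow, map_neg, map_one]
  rfl
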